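/- If α is a unit-speed curve in ℝ³ with Frenet apparatus (t^α, n₁^α, n₂^α, k^α, r^α) and r^α nowhere zero, then the curve β(s) = ∫_{s₀}^s n₂^α(u) du is unit-speed with Frenet apparatus satisfying t^β = n₂^α, k^β = |r^α|, n₁^β = ±n₁^α, n₂^β = ∓t^α, and torsion r^β = k^α (with sign conventions: if r^α > 0 then n₁^β = -n₁^α). -/
import Mathlib


/-- For a unit-speed curve α with Frenet apparatus
(t, n₁, n₂, k, r), r nowhere zero, the curve β(s) = ∫_{s₀}^s n₂(u) du is unit-speed
with Frenet apparatus t^β = n₂, k^β = |r|, n₁^β = ε n₁, n₂^β = -ε t and torsion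
r^β = k, where ε = -1 if r > 0 and ε = 1 otherwise. -/
theorem stmt_9 (t n₁ n₂ : ℝ → EuclideanSpace ℝ (Fin 3)) (k r : ℝ → ℝ)
    (ht : ∀ s, ‖t s‖ = 1) (hn₁ : ∀ s, ‖n₁ s‖ = 1) (hn₂ : ∀ s, ‖n₂ s‖ = 1)
    (hk : ∀ s, 0 < k s) (hr : ∀ s, r s ≠ 0)
    (hkc : Continuous k) (hrc : Continuous r)
    (hFt : ∀ s, HasDerivAt t (k s • n₁ s) s)
    (hFn₁ : ∀ s, HasDerivAt n₁ (-(k s) • t s + r s • n₂ s) s)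
    (hFn₂ : ∀ s, HasDerivAt n₂ (-(r s) • n₁ s) s)
    (s₀ : ℝ) (β : ℝ → EuclideanSpace ℝ (Fin 3))
    (hβ : ∀ s, β s = ∫ u in s₀..s, n₂ u) :
    -- t^β = n₂^α and β is unit speed
    (∀ s, HasDerivAt β (n₂ s) s) ∧ (∀ s, ‖n₂ s‖ = 1) ∧
    -- (t^β)' = k^β • n₁^β with k^β = |r| and n₁^β = ε • n₁
    (∀ s, HasDerivAt n₂ (|r s| • ((if 0 < r s then (-1 : ℝ) else 1) • n₁ s)) s) ∧
    -- (n₁^β)' = -k^β • t^β + r^β • n₂^β with r^β = k and n₂^β = -ε • t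
    (∀ s, HasDerivAt (fun u => (if 0 < r u then (-1 : ℝ) else 1) • n₁ u)
      (-(|r s|) • n₂ s + k s • (-(if 0 < r s then (-1 : ℝ) else 1) • t s)) s) ∧
    -- (n₂^β)' = -r^β • n₁^β
    (∀ s, HasDerivAt (fun u => -(if 0 < r u then (-1 : ℝ) else 1) • t u)
      (-(k s) • ((if 0 < r s then (-1 : ℝ) else 1) • n₁ s)) s) := by
  set ε : ℝ → ℝ := fun u => (if 0 < r u then (-1 : ℝ) else 1) with hε
  -- ε is locally constant
  have hloc : ∀ s, ∀ᶠ u in nhds s, ε u = ε s := by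
    intro s
    rcases lt_or_gt_of_ne (hr s) with h | h
    · have : ∀ᶠ u in nhds s, r u < 0 :=
        (hrc.continuousAt).eventually_lt continuousAt_const h
      filter_upwards [this] with u hu
      simp [hε, not_lt.mpr hu.le, not_lt.mpr (lt_of_lt_of_le h (le_refl _)).le]
    · have : ∀ᶠ u in nhds s, 0 < r u :=
        (continuousAt_const).eventually_lt (hrc.continuousAt) h
      filter_upwards [this] with u hu
      simp [hε, hu, h]
  have hεr : ∀ s, ε s * r s = -|r s| := by
    intro s
    rcases lt_or_gt_of_ne (hr s) with h | h
    · simp [hε, not_lt.mpr h.le, abs_of_neg h]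
    · simp [hε, h, abs_of_pos h]
  have hn₂c : Continuous n₂ := continuous_iff_continuousAt.mpr
    fun s => (hFn₂ s).continuousAt
  refine ⟨?_, hn₂, ?_, ?_, ?_⟩
  · intro s
    have : HasDerivAt (fun x => ∫ u in s₀..x, n₂ u) (n₂ s) s :=
      intervalIntegral.integral_hasDerivAt_right
        (hn₂c.intervalIntegrable _ _)
        (hn₂c.stronglyMeasurableAtFilter _ _)
        hn₂c.continuousAt
    have hβf : β = fun x => ∫ u in s₀..x, n₂ u := funext hβ
    rw [hβf]; exact this
  · intro s
    have := hFn₂ s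
    have heq : -(r s) • n₁ s = |r s| • (ε s • n₁ s) := by
      rw [smul_smul]
      have : |r s| * ε s = -(r s) := by
        rcases lt_or_gt_of_ne (hr s) with h | h
        · simp [hε, not_lt.mpr h.le, abs_of_neg h]
        · simp [hε, h, abs_of_pos h]
      rw [this]
    rw [heq] at this; exact this
  · intro s
    have h1 : HasDerivAt (fun u => ε s • n₁ u) (ε s • (-(k s) • t s + r s • n₂ s)) s :=
      (hFn₁ s).const_smul (ε s)
    have h2 : HasDerivAt (fun u => ε u • n₁ u) (ε s • (-(k s) • t s + r s • n₂ s)) s := by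
      refine h1.congr_of_eventuallyEq ?_
      filter_upwards [hloc s] with u hu
      rw [hu]
    have heq : ε s • (-(k s) • t s + r s • n₂ s)
        = -(|r s|) • n₂ s + k s • (-ε s • t s) := by
      rw [smul_add, smul_smul, smul_smul, hεr s]
      module
    rw [heq] at h2; exact h2
  · intro s
    have h1 : HasDerivAt (fun u => -ε s • t u) (-ε s • (k s • n₁ s)) s :=
      (hFt s).const_smul (-ε s)
    have h2 : HasDerivAt (fun u => -ε u • t u) (-ε s • (k s • n₁ s)) s := by
      refine h1.congr_of_eventuallyEq ?_
      filter_upwards [hloc s] with u hu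
      rw [hu]
    have heq : -ε s • (k s • n₁ s) = -(k s) • (ε s • n₁ s) := by
      rw [smul_smul, smul_smul]; ring_nf
    rw [heq] at h2; exact h2
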